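/- arXiv:1803.03383 — 4 statements merged into one kernel-verified Lean document; each statement's English description precedes it below -/
import Mathlib

section
/- Let (δ, b) be a low-precision representation and let w* ∈ ℝ^d be a vector with every component in the representable range, i.e., −δ·2^(b−1) ≤ (w*)_j ≤ δ·(2^(b−1)−1) for all j. Then for any w ∈ ℝ^d, the stochastic rounding quantizer satisfies E[‖Q_{(δ,b)}(w) − w*‖²] ≤ ‖w − w*‖² + dδ²/4, where the components of w are quantized independently. -/
open MeasureTheory
open scoped ENNReal

/-- The uniform distribution on `[0,1]`, used as the source of randomness for one
stochastic-rounding coin. -/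
noncomputable def unif01 : Measure ℝ := volume.restrict (Set.Icc (0 : ℝ) 1)

instance : IsProbabilityMeasure unif01 := by
  constructor
  simp [unif01, Real.volume_Icc]

/-- Scalar stochastic-rounding quantizer for the low-precision representation `(δ, b)`,
driven by a uniform random number `u ∈ [0,1]`.  Values outside the representable range
`[−δ·2^(b−1), δ·(2^(b−1)−1)]` are deterministically mapped to the nearest representable
value; a value `x` inside the range is rounded up to the next grid point `z + δ`
(where `z = δ⌊x/δ⌋` is the largest grid point `≤ x`) when `u < (x − z)/δ`, i.e. with
probability `(x − z)/δ`, and rounded down to `z` otherwise. -/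
noncomputable def sround (δ : ℝ) (b : ℕ) (x u : ℝ) : ℝ :=
  if x < -δ * 2 ^ (b - 1) then -δ * 2 ^ (b - 1)
  else if δ * (2 ^ (b - 1) - 1) < x then δ * (2 ^ (b - 1) - 1)
  else if u < (x - δ * (⌊x / δ⌋ : ℝ)) / δ then δ * ((⌊x / δ⌋ : ℝ) + 1)
  else δ * (⌊x / δ⌋ : ℝ)

lemma measurable_sround (δ : ℝ) (b : ℕ) (x : ℝ) : Measurable (sround δ b x) := by
  unfold sround
  by_cases h1 : x < -δ * 2 ^ (b - 1)
  · simp only [if_pos h1]; exact measurable_const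
  by_cases h2 : δ * (2 ^ (b - 1) - 1) < x
  · simp only [if_neg h1, if_pos h2]; exact measurable_const
  simp only [if_neg h1, if_neg h2]
  exact Measurable.ite measurableSet_Iio measurable_const measurable_const

lemma integrable_sq (δ : ℝ) (b : ℕ) (x y : ℝ) :
    Integrable (fun u => (sround δ b x u - y) ^ 2) unif01 := by
  set C : ℝ := (-δ * 2 ^ (b - 1) - y) ^ 2 + (δ * (2 ^ (b - 1) - 1) - y) ^ 2
    + (δ * (⌊x / δ⌋ : ℝ) - y) ^ 2 + (δ * ((⌊x / δ⌋ : ℝ) + 1) - y) ^ 2 with hC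
  have hmeas : Measurable (fun u => (sround δ b x u - y) ^ 2) :=
    ((measurable_sround δ b x).sub measurable_const).pow_const 2
  refine (integrable_const C).mono' hmeas.aestronglyMeasurable (ae_of_all _ fun u => ?_)
  rw [Real.norm_eq_abs, abs_of_nonneg (sq_nonneg _)]
  unfold sround
  rw [hC]
  split_ifs <;>
    nlinarith [sq_nonneg (-δ * 2 ^ (b - 1) - y), sq_nonneg (δ * (2 ^ (b - 1) - 1) - y),
      sq_nonneg (δ * (⌊x / δ⌋ : ℝ) - y), sq_nonneg (δ * ((⌊x / δ⌋ : ℝ) + 1) - y)]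

lemma integral_ite (p A B : ℝ) (hp0 : 0 ≤ p) (hp1 : p ≤ 1) :
    ∫ u, (if u < p then A else B) ∂unif01 = p * A + (1 - p) * B := by
  have hs : Set.Icc (0 : ℝ) 1 = Set.Ico 0 p ∪ Set.Icc p 1 := by
    ext u
    simp only [Set.mem_Icc, Set.mem_union, Set.mem_Ico]
    constructor
    · rintro ⟨h0, h1⟩
      rcases lt_or_ge u p with h | h
      · exact Or.inl ⟨h0, h⟩
      · exact Or.inr ⟨h, h1⟩
    · rintro (⟨h0, h⟩ | ⟨h, h1⟩)
      exacts [⟨h0, h.le.trans hp1⟩, ⟨hp0.trans h, h1⟩]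
  have hdisj : Disjoint (Set.Ico (0:ℝ) p) (Set.Icc p 1) :=
    Set.disjoint_left.mpr fun u hu hu' => absurd hu.2 (not_lt.mpr hu'.1)
  have hIA : IntegrableOn (fun u : ℝ => if u < p then A else B) (Set.Ico 0 p) volume := by
    refine ((integrableOn_const_iff (C := A)).mpr (Or.inr ?_)).congr_fun
      (fun u hu => (if_pos hu.2).symm) measurableSet_Ico
    simp [Real.volume_Ico]
  have hIB : IntegrableOn (fun u : ℝ => if u < p then A else B) (Set.Icc p 1) volume := by
    refine ((integrableOn_const_iff (C := B)).mpr (Or.inr ?_)).congr_fun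
      (fun u hu => (if_neg (not_lt.mpr hu.1)).symm) measurableSet_Icc
    simp [Real.volume_Icc]
  rw [unif01, hs, setIntegral_union hdisj measurableSet_Icc hIA hIB]
  rw [setIntegral_congr_fun measurableSet_Ico (fun u hu => if_pos hu.2),
    setIntegral_congr_fun measurableSet_Icc (fun u (hu : u ∈ Set.Icc p 1) => if_neg (not_lt.mpr hu.1)),
    setIntegral_const, setIntegral_const, Real.volume_real_Ico_of_le hp0,
    Real.volume_real_Icc_of_le hp1]
  simp only [smul_eq_mul]
  ring

lemma scalar_bound (δ : ℝ) (hδ : 0 < δ) (b : ℕ) (x y : ℝ)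
    (hy1 : -δ * 2 ^ (b - 1) ≤ y) (hy2 : y ≤ δ * (2 ^ (b - 1) - 1)) :
    ∫ u, (sround δ b x u - y) ^ 2 ∂unif01 ≤ (x - y) ^ 2 + δ ^ 2 / 4 := by
  by_cases h1 : x < -δ * 2 ^ (b - 1)
  · simp only [sround, if_pos h1]
    rw [integral_const]
    simp only [measure_univ, probReal_univ, ENNReal.toReal_one, one_smul]
    nlinarith [sq_nonneg δ]
  by_cases h2 : δ * (2 ^ (b - 1) - 1) < x
  · simp only [sround, if_neg h1, if_pos h2]
    rw [integral_const]
    simp only [measure_univ, probReal_univ, ENNReal.toReal_one, one_smul]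
    nlinarith [sq_nonneg δ]
  set z : ℝ := δ * (⌊x / δ⌋ : ℝ) with hz
  set p : ℝ := (x - z) / δ with hp
  have hzx : z ≤ x := by
    have := Int.floor_le (x / δ)
    calc z = δ * (⌊x / δ⌋ : ℝ) := hz
    _ ≤ δ * (x / δ) := by nlinarith
    _ = x := by field_simp
  have hxz : x < z + δ := by
    have h0 : x / δ < (⌊x / δ⌋ : ℝ) + 1 := Int.lt_floor_add_one (x / δ)
    have h1 : x = δ * (x / δ) := by field_simp
    have h2 : δ * (x / δ) < δ * ((⌊x / δ⌋ : ℝ) + 1) := by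
      exact mul_lt_mul_of_pos_left h0 hδ
    have : z + δ = δ * ((⌊x / δ⌋ : ℝ) + 1) := by rw [hz]; ring
    linarith
  have hp0 : 0 ≤ p := div_nonneg (by linarith) hδ.le
  have hp1 : p ≤ 1 := by
    rw [div_le_one hδ]; linarith
  have hpδ : p * δ = x - z := by rw [hp, div_mul_cancel₀ _ hδ.ne']
  have hren : ∀ u, (sround δ b x u - y) ^ 2
      = if u < p then (z + δ - y) ^ 2 else (z - y) ^ 2 := by
    intro u
    simp only [sround, if_neg h1, if_neg h2, ← hz, ← hp]
    rcases lt_or_ge u p with h | h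
    · rw [if_pos h, if_pos h, hz]; ring_nf
    · rw [if_neg (not_lt.mpr h), if_neg (not_lt.mpr h)]
  simp only [hren]
  rw [integral_ite _ _ _ hp0 hp1]
  nlinarith [sq_nonneg (δ - 2 * (x - z))]

/-- Componentwise stochastic rounding of a vector in `ℝ^d`, using an independent uniform
random number `u j` for each coordinate `j`. -/
noncomputable def svround {d : ℕ} (δ : ℝ) (b : ℕ)
    (x : EuclideanSpace ℝ (Fin d)) (u : Fin d → ℝ) : EuclideanSpace ℝ (Fin d) :=
  WithLp.toLp 2 (fun j => sround δ b (x j) (u j))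

lemma map_eval {d : ℕ} (j : Fin d) :
    (Measure.pi fun _ : Fin d => unif01).map (fun u => u j) = unif01 := by
  refine Measure.ext fun s hs => ?_
  rw [Measure.map_apply (measurable_pi_apply j) hs]
  have h : (fun u : Fin d → ℝ => u j) ⁻¹' s
      = Set.pi Set.univ (Function.update (fun _ : Fin d => (Set.univ : Set ℝ)) j s) :=
    Set.eval_preimage
  rw [h, Measure.pi_pi]
  rw [Finset.prod_eq_single j
    (fun c _ hc => by simp [Function.update_of_ne hc, measure_univ])
    (fun h => absurd (Finset.mem_univ j) h)]
  simp

/-- **Quantization lemma (Lemma 1).**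
If every component of `w*` lies in the representable range of `(δ, b)`, then stochastically
rounding any `w ∈ ℝ^d` (componentwise independently) satisfies
`E[‖Q_{(δ,b)}(w) − w*‖²] ≤ ‖w − w*‖² + dδ²/4`. -/
theorem quantization_lemma {d : ℕ} (δ : ℝ) (b : ℕ) (hδ : 0 < δ)
    (wstar w : EuclideanSpace ℝ (Fin d))
    (hrange : ∀ j, -δ * 2 ^ (b - 1) ≤ wstar j ∧ wstar j ≤ δ * (2 ^ (b - 1) - 1)) :
    ∫ u, ‖svround δ b w u - wstar‖ ^ 2 ∂(Measure.pi fun _ : Fin d => unif01)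
      ≤ ‖w - wstar‖ ^ 2 + d * δ ^ 2 / 4 := by
  have hnorm : ∀ u : Fin d → ℝ, ‖svround δ b w u - wstar‖ ^ 2
      = ∑ j, (sround δ b (w j) (u j) - wstar j) ^ 2 := by
    intro u
    rw [EuclideanSpace.norm_eq, Real.sq_sqrt (Finset.sum_nonneg fun j _ => sq_nonneg _)]
    refine Finset.sum_congr rfl fun j _ => ?_
    simp [svround, Real.norm_eq_abs, sq_abs, PiLp.sub_apply]
  have hmeasg : ∀ j : Fin d, Measurable fun v : ℝ => (sround δ b (w j) v - wstar j) ^ 2 :=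
    fun j => ((measurable_sround _ _ _).sub measurable_const).pow_const 2
  have hint : ∀ j : Fin d, Integrable
      (fun u : Fin d → ℝ => (sround δ b (w j) (u j) - wstar j) ^ 2)
      (Measure.pi fun _ : Fin d => unif01) := by
    intro j
    have h2 : Integrable (fun v : ℝ => (sround δ b (w j) v - wstar j) ^ 2)
        ((Measure.pi fun _ : Fin d => unif01).map (fun u => u j)) := by
      rw [map_eval j]; exact integrable_sq δ b (w j) (wstar j)
    exact (integrable_map_measure h2.aestronglyMeasurable
      (measurable_pi_apply j).aemeasurable).mp h2
  have heq : ∀ j : Fin d,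
      ∫ u, (sround δ b (w j) (u j) - wstar j) ^ 2 ∂(Measure.pi fun _ : Fin d => unif01)
        = ∫ v, (sround δ b (w j) v - wstar j) ^ 2 ∂unif01 := by
    intro j
    have h := integral_map (μ := Measure.pi fun _ : Fin d => unif01)
      (φ := fun u => u j) (measurable_pi_apply j).aemeasurable
      (f := fun v : ℝ => (sround δ b (w j) v - wstar j) ^ 2)
      ((hmeasg j).aestronglyMeasurable)
    rw [map_eval j] at h
    exact h.symm
  have hnorm2 : ‖w - wstar‖ ^ 2 = ∑ j, (w j - wstar j) ^ 2 := by
    rw [EuclideanSpace.norm_eq, Real.sq_sqrt (Finset.sum_nonneg fun j _ => sq_nonneg _)]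
    refine Finset.sum_congr rfl fun j _ => ?_
    simp [Real.norm_eq_abs, sq_abs, PiLp.sub_apply]
  simp only [hnorm]
  rw [integral_finset_sum _ (fun j _ => hint j)]
  calc ∑ j, ∫ u, (sround δ b (w j) (u j) - wstar j) ^ 2 ∂(Measure.pi fun _ : Fin d => unif01)
      ≤ ∑ j, ((w j - wstar j) ^ 2 + δ ^ 2 / 4) :=
        Finset.sum_le_sum fun j _ => by
          rw [heq j]
          exact scalar_bound δ hδ b (w j) (wstar j) (hrange j).1 (hrange j).2
    _ = ‖w - wstar‖ ^ 2 + d * δ ^ 2 / 4 := by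
        rw [Finset.sum_add_distrib, Finset.sum_const, Finset.card_univ, Fintype.card_fin,
          hnorm2, nsmul_eq_mul]
        ring
end

section
/- Let δ > 0, let z ≤ w ≤ z + δ and w* be real numbers, and let X be a random variable that takes the value z + δ with probability (w − z)/δ and the value z with probability (z + δ − w)/δ. Then E[(X − w*)²] ≤ (w − w*)² + δ²/4. -/
open MeasureTheory

/-- **One-dimensional quantization lemma (interior case).**
If `z ≤ w ≤ z + δ` and `X` takes the value `z + δ` with probability `(w - z)/δ` and the
value `z` with probability `(z + δ - w)/δ`, then for any real `w*`,
`E[(X - w*)²] ≤ (w - w*)² + δ²/4`. -/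
theorem stochastic_rounding_distance_bound
    {Ω : Type*} [MeasurableSpace Ω] (P : Measure Ω) [IsProbabilityMeasure P]
    (δ z w wstar : ℝ) (hδ : 0 < δ) (hzw : z ≤ w) (hwz : w ≤ z + δ)
    (X : Ω → ℝ) (hX : Measurable X)
    (hup : P {ω | X ω = z + δ} = ENNReal.ofReal ((w - z) / δ))
    (hdown : P {ω | X ω = z} = ENNReal.ofReal ((z + δ - w) / δ)) :
    ∫ ω, (X ω - wstar) ^ 2 ∂P ≤ (w - wstar) ^ 2 + δ ^ 2 / 4 := by
  set A : Set Ω := {ω | X ω = z + δ} with hA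
  set B : Set Ω := {ω | X ω = z} with hB
  have hAm : MeasurableSet A := hX (measurableSet_singleton (z + δ))
  have hp0 : (0:ℝ) ≤ (w - z) / δ := div_nonneg (by linarith) hδ.le
  have hq0 : (0:ℝ) ≤ (z + δ - w) / δ := div_nonneg (by linarith) hδ.le
  have hsum : (w - z) / δ + (z + δ - w) / δ = 1 := by
    field_simp
    ring
  have hPAB : P A + P B = 1 := by
    rw [hup, hdown, ← ENNReal.ofReal_add hp0 hq0, hsum, ENNReal.ofReal_one]
  have hdisj : Disjoint A B := by
    rw [Set.disjoint_left]
    intro ω h1 h2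
    simp only [hA, hB, Set.mem_setOf_eq] at h1 h2
    rw [h2] at h1; linarith
  have hBm : MeasurableSet B := hX (measurableSet_singleton z)
  have hunion : P (A ∪ B) = 1 := by
    rw [measure_union hdisj hBm, hPAB]
  have hcompl : P (A ∪ B)ᶜ = 0 := by
    rw [measure_compl (hAm.union hBm) (measure_ne_top P _), hunion]
    simp
  -- a.e. equality with a two-valued function
  set g : Ω → ℝ := fun ω => if X ω = z + δ then (z + δ - wstar) ^ 2 else (z - wstar) ^ 2
    with hg
  have hae : (fun ω => (X ω - wstar) ^ 2) =ᵐ[P] g := by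
    refine MeasureTheory.ae_iff.mpr (measure_mono_null ?_ hcompl)
    intro ω hω
    simp only [Set.mem_setOf_eq] at hω
    simp only [Set.mem_compl_iff, Set.mem_union, hA, hB, Set.mem_setOf_eq]
    rintro (h | h)
    · exact hω (by simp [hg, h])
    · apply hω
      have hne : X ω ≠ z + δ := by rw [h]; intro hc; linarith
      simp only [hg, h, if_neg hne]
  have hgdecomp : g = (fun ω => A.indicator (fun _ => (z + δ - wstar) ^ 2) ω
      + Aᶜ.indicator (fun _ => (z - wstar) ^ 2) ω) := by
    funext ω
    by_cases h : X ω = z + δ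
    · simp [hg, hA, Set.indicator_apply, h]
    · simp [hg, hA, Set.indicator_apply, h]
  have hint : ∫ ω, g ω ∂P
      = (P A).toReal * (z + δ - wstar) ^ 2 + (P Aᶜ).toReal * (z - wstar) ^ 2 := by
    rw [hgdecomp]
    rw [integral_add ((integrable_const _).indicator hAm)
        ((integrable_const _).indicator hAm.compl),
      integral_indicator hAm, integral_indicator hAm.compl,
      setIntegral_const, setIntegral_const]
    simp [smul_eq_mul]
    rfl
  have hPA : (P A).toReal = (w - z) / δ := by
    rw [hup, ENNReal.toReal_ofReal hp0]
  have hPAc : (P Aᶜ).toReal = (z + δ - w) / δ := by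
    have : P Aᶜ = P B := by
      rw [measure_compl hAm (measure_ne_top P _), measure_univ]
      exact ENNReal.sub_eq_of_eq_add (measure_ne_top P A) (by rw [add_comm]; exact hPAB.symm)
    rw [this, hdown, ENNReal.toReal_ofReal hq0]
  rw [integral_congr_ae hae, hint, hPA, hPAc]
  have key : (w - z) / δ * (z + δ - wstar) ^ 2 + (z + δ - w) / δ * (z - wstar) ^ 2
      ≤ (w - wstar) ^ 2 + δ ^ 2 / 4 := by
    rw [div_mul_eq_mul_div, div_mul_eq_mul_div, ← add_div, div_le_iff₀ hδ]
    nlinarith [sq_nonneg (w - z - δ / 2), sq_nonneg δ]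
  exact key
end

section
/- Let f_1, …, f_N : ℝ^d → ℝ be convex differentiable functions whose gradients are each L-Lipschitz continuous, let f = (1/N)·Σ_{i=1}^N f_i, and let w* be a global minimizer of f. Then for every w ∈ ℝ^d, (1/N)·Σ_{i=1}^N ‖∇f_i(w) − ∇f_i(w*)‖² ≤ 2L·(f(w) − f(w*)). Equivalently, if i is sampled uniformly at random from {1,…,N}, then E[‖∇f_i(w) − ∇f_i(w*)‖²] ≤ 2L·(f(w) − f(w*)). -/
open scoped BigOperators
open scoped RealInnerProductSpace

section Aux

variable {E : Type*} [NormedAddCommGroup E] [InnerProductSpace ℝ E] [CompleteSpace E]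

private lemma line_hasDerivAt (g : E → ℝ) (hg : Differentiable ℝ g) (x v : E) (t : ℝ) :
    HasDerivAt (fun s : ℝ => g (x + s • v)) ⟪gradient g (x + t • v), v⟫ t := by
  have h1 : HasDerivAt (fun s : ℝ => x + s • v) v t := by
    simpa using ((hasDerivAt_id t).smul_const v).const_add x
  have h2 : HasFDerivAt g (InnerProductSpace.toDual ℝ E (gradient g (x + t • v))) (x + t • v) :=
    (hasGradientAt_iff_hasFDerivAt).1 (hg (x + t • v)).hasGradientAt
  have := h2.comp_hasDerivAt t h1
  simpa [InnerProductSpace.toDual_apply_apply, Function.comp_def] using this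

private lemma grad_lower (g : E → ℝ) (hconv : ConvexOn ℝ Set.univ g)
    (hg : Differentiable ℝ g) (x y : E) :
    g x + ⟪gradient g x, y - x⟫ ≤ g y := by
  set v := y - x with hv
  have hc : ConvexOn ℝ Set.univ (fun s : ℝ => g (x + s • v)) := by
    have h := hconv.comp_affineMap (AffineMap.lineMap x y : ℝ →ᵃ[ℝ] E)
    have he : (g ∘ (AffineMap.lineMap x y : ℝ →ᵃ[ℝ] E)) = fun s : ℝ => g (x + s • v) := by
      funext s
      simp [AffineMap.lineMap_apply, hv, add_comm, vsub_eq_sub]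
    rw [he] at h
    simpa using h
  have hder := line_hasDerivAt g hg x v 0
  have h0 : x + (0 : ℝ) • v = x := by simp
  rw [h0] at hder
  have hs := hc.le_slope_of_hasDerivAt (Set.mem_univ (0 : ℝ)) (Set.mem_univ (1 : ℝ))
    one_pos hder
  have h1 : x + (1 : ℝ) • v = y := by simp [hv]
  rw [slope_def_field] at hs
  simp only [h1, h0] at hs
  have : ⟪gradient g x, v⟫ ≤ g y - g x := by
    simpa [div_one] using hs
  linarith

private lemma descent (g : E → ℝ) (hg : Differentiable ℝ g) (L : ℝ)
    (hlip : ∀ a b, ‖gradient g a - gradient g b‖ ≤ L * ‖a - b‖) (x y : E) :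
    g y ≤ g x + ⟪gradient g x, y - x⟫ + L / 2 * ‖y - x‖ ^ 2 := by
  set v := y - x with hv
  set c : ℝ := ⟪gradient g x, v⟫ with hc
  set ψ : ℝ → ℝ := fun t => g x + t * c + L / 2 * ‖v‖ ^ 2 * t ^ 2 - g (x + t • v) with hψ
  have hd : ∀ t : ℝ, HasDerivAt ψ
      (c + L * ‖v‖ ^ 2 * t - ⟪gradient g (x + t • v), v⟫) t := by
    intro t
    have h1 := line_hasDerivAt g hg x v t
    have h2 : HasDerivAt (fun t : ℝ => g x + t * c + L / 2 * ‖v‖ ^ 2 * t ^ 2)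
        (c + L * ‖v‖ ^ 2 * t) t := by
      have ha : HasDerivAt (fun t : ℝ => t * c) c t := by
        simpa using (hasDerivAt_id t).mul_const c
      have hb : HasDerivAt (fun t : ℝ => L / 2 * ‖v‖ ^ 2 * t ^ 2)
          (L / 2 * ‖v‖ ^ 2 * (2 * t)) t := by
        simpa using (hasDerivAt_pow 2 t).const_mul (L / 2 * ‖v‖ ^ 2)
      have := (ha.const_add (g x)).add hb
      refine this.congr_deriv ?_
      ring
    exact h2.sub h1
  have hmono : MonotoneOn ψ (Set.Icc (0 : ℝ) 1) := by
    apply monotoneOn_of_deriv_nonneg (convex_Icc 0 1)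
    · exact fun t _ => ((hd t).differentiableAt).continuousAt.continuousWithinAt
    · exact fun t _ => ((hd t).differentiableAt).differentiableWithinAt
    · intro t ht
      rw [interior_Icc] at ht
      rw [(hd t).deriv]
      have hineq : ⟪gradient g (x + t • v), v⟫ - c ≤ L * ‖v‖ ^ 2 * t := by
        have h3 : ⟪gradient g (x + t • v) - gradient g x, v⟫
            ≤ ‖gradient g (x + t • v) - gradient g x‖ * ‖v‖ := real_inner_le_norm _ _
        have h4 : ‖gradient g (x + t • v) - gradient g x‖ ≤ L * (t * ‖v‖) := by
          have := hlip (x + t • v) x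
          have he : ‖(x + t • v) - x‖ = t * ‖v‖ := by
            rw [add_sub_cancel_left, norm_smul, Real.norm_eq_abs, abs_of_pos ht.1]
          rwa [he] at this
        have h5 : ‖gradient g (x + t • v) - gradient g x‖ * ‖v‖ ≤ L * (t * ‖v‖) * ‖v‖ :=
          mul_le_mul_of_nonneg_right h4 (norm_nonneg v)
        have h6 : ⟪gradient g (x + t • v) - gradient g x, v⟫
            = ⟪gradient g (x + t • v), v⟫ - c := by rw [inner_sub_left, hc]
        nlinarith [h3]
      linarith
  have hle := hmono (Set.left_mem_Icc.2 zero_le_one) (Set.right_mem_Icc.2 zero_le_one)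
    zero_le_one
  have h0 : ψ 0 = 0 := by simp [hψ]
  have h1 : ψ 1 = g x + c + L / 2 * ‖v‖ ^ 2 - g y := by
    have hxy : x + v = y := by simp [hv]
    simp [hψ, hxy]
  rw [h0, h1] at hle
  linarith

private lemma key_ineq (g : E → ℝ) (hconv : ConvexOn ℝ Set.univ g)
    (hg : Differentiable ℝ g) (L : ℝ) (hL : 0 < L)
    (hlip : ∀ a b, ‖gradient g a - gradient g b‖ ≤ L * ‖a - b‖) (x y : E) :
    ‖gradient g x - gradient g y‖ ^ 2
      ≤ 2 * L * (g x - g y - ⟪gradient g y, x - y⟫) := by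
  set D := gradient g x - gradient g y with hD
  set z := x - L⁻¹ • D with hz
  have h1 := grad_lower g hconv hg y z
  have h2 := descent g hg L hlip x z
  have e1 : ⟪gradient g x, z - x⟫ = -(L⁻¹ * ⟪gradient g x, D⟫) := by
    have : z - x = -(L⁻¹ • D) := by rw [hz]; abel
    rw [this, inner_neg_right, real_inner_smul_right]
  have e2 : ‖z - x‖ ^ 2 = L⁻¹ ^ 2 * ‖D‖ ^ 2 := by
    have : z - x = -(L⁻¹ • D) := by rw [hz]; abel
    rw [this, norm_neg, norm_smul, Real.norm_eq_abs, mul_pow, sq_abs]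
  have e3 : ⟪gradient g y, z - y⟫ = ⟪gradient g y, x - y⟫ - L⁻¹ * ⟪gradient g y, D⟫ := by
    have : z - y = (x - y) - L⁻¹ • D := by rw [hz]; abel
    rw [this, inner_sub_right, real_inner_smul_right]
  have e4 : ⟪gradient g x, D⟫ - ⟪gradient g y, D⟫ = ‖D‖ ^ 2 := by
    rw [← inner_sub_left, ← hD, real_inner_self_eq_norm_sq]
  rw [e3] at h1
  rw [e1, e2] at h2
  have hLi : L⁻¹ > 0 := inv_pos.2 hL
  have hfinal : L⁻¹ * ‖D‖ ^ 2 - L / 2 * (L⁻¹ ^ 2 * ‖D‖ ^ 2)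
      ≤ g x - g y - ⟪gradient g y, x - y⟫ := by nlinarith [e4]
  have hsimp : L⁻¹ * ‖D‖ ^ 2 - L / 2 * (L⁻¹ ^ 2 * ‖D‖ ^ 2) = ‖D‖ ^ 2 / (2 * L) := by
    field_simp
    ring
  rw [hsimp] at hfinal
  calc ‖D‖ ^ 2 = 2 * L * (‖D‖ ^ 2 / (2 * L)) := by field_simp
    _ ≤ 2 * L * (g x - g y - ⟪gradient g y, x - y⟫) :=
        mul_le_mul_of_nonneg_left hfinal (by positivity)

end Aux

/-- **Lemma 2 (equation (8) of Johnson & Zhang).**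
If each `f_i : ℝ^d → ℝ` is convex and differentiable with `L`-Lipschitz gradient,
`f = (1/N)·Σᵢ fᵢ`, and `w*` is a global minimizer of `f`, then for every `w`,
`(1/N)·Σᵢ ‖∇fᵢ(w) − ∇fᵢ(w*)‖² ≤ 2L(f(w) − f(w*))`; equivalently, for `i` uniform on
`{1,…,N}`, `E[‖∇fᵢ(w) − ∇fᵢ(w*)‖²] ≤ 2L(f(w) − f(w*))`. -/
theorem svrg_second_moment_lemma {d N : ℕ} (L : ℝ)
    (fi : Fin N → EuclideanSpace ℝ (Fin d) → ℝ)
    (f : EuclideanSpace ℝ (Fin d) → ℝ)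
    (hconv : ∀ i, ConvexOn ℝ Set.univ (fi i))
    (hdiff : ∀ i, Differentiable ℝ (fi i))
    (hlip : ∀ i x y, ‖gradient (fi i) x - gradient (fi i) y‖ ≤ L * ‖x - y‖)
    (hf : ∀ x, f x = (N : ℝ)⁻¹ * ∑ i, fi i x)
    (wstar : EuclideanSpace ℝ (Fin d))
    (hmin : ∀ x, f wstar ≤ f x) :
    ∀ w, (N : ℝ)⁻¹ * ∑ i, ‖gradient (fi i) w - gradient (fi i) wstar‖ ^ 2
      ≤ 2 * L * (f w - f wstar) := by
  intro w
  rcases Nat.eq_zero_or_pos N with hN | hN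
  · subst hN
    simp [hf]
  -- u : direction
  set u : EuclideanSpace ℝ (Fin d) := w - wstar with hu
  -- S = 0 : derivative of f along u at wstar vanishes
  have hS : ∑ i, ⟪gradient (fi i) wstar, u⟫ = 0 := by
    set φ : ℝ → ℝ := fun t => ∑ i, fi i (wstar + t • u) with hφ
    have hder : HasDerivAt φ (∑ i, ⟪gradient (fi i) (wstar + (0:ℝ) • u), u⟫) 0 :=
      HasDerivAt.fun_sum fun i _ => line_hasDerivAt (fi i) (hdiff i) wstar u 0
    have hloc : IsLocalMin φ 0 := by
      apply Filter.Eventually.of_forall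
      intro t
      have h1 := hmin (wstar + t • u)
      rw [hf, hf] at h1
      have hNpos : (0:ℝ) < (N : ℝ) := by exact_mod_cast hN
      have := (mul_le_mul_iff_right₀ (inv_pos.2 hNpos)).1 h1
      simpa [hφ] using this
    have := hloc.hasDerivAt_eq_zero hder
    simpa using this
  rcases le_or_gt L 0 with hL | hL
  -- Case L ≤ 0 : all gradient differences vanish and f w = f wstar
  · have hgrad : ∀ i, gradient (fi i) w = gradient (fi i) wstar := by
      intro i
      have h1 := hlip i w wstar
      have h2 : L * ‖w - wstar‖ ≤ 0 := mul_nonpos_of_nonpos_of_nonneg hL (norm_nonneg _)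
      have h3 : ‖gradient (fi i) w - gradient (fi i) wstar‖ ≤ 0 := h1.trans h2
      have := le_antisymm h3 (norm_nonneg _)
      rwa [norm_eq_zero, sub_eq_zero] at this
    have heqi : ∀ i, fi i w - fi i wstar = ⟪gradient (fi i) wstar, u⟫ := by
      intro i
      have ha := grad_lower (fi i) (hconv i) (hdiff i) wstar w
      have hb := grad_lower (fi i) (hconv i) (hdiff i) w wstar
      rw [hgrad i] at hb
      have hnb : ⟪gradient (fi i) wstar, wstar - w⟫ = -⟪gradient (fi i) wstar, u⟫ := by
        rw [hu, ← inner_neg_right, neg_sub]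
      rw [hnb] at hb
      rw [← hu] at ha
      linarith
    have hfw : f w = f wstar := by
      rw [hf, hf]
      have : ∑ i, fi i w - ∑ i, fi i wstar = 0 := by
        rw [← Finset.sum_sub_distrib]
        rw [Finset.sum_congr rfl fun i _ => heqi i]
        exact hS
      have h := sub_eq_zero.1 this
      rw [h]
    have hzero : ∑ i, ‖gradient (fi i) w - gradient (fi i) wstar‖ ^ 2 = 0 := by
      apply Finset.sum_eq_zero
      intro i _
      rw [hgrad i, sub_self, norm_zero]
      norm_num
    rw [hzero, hfw]
    simp
  -- Case 0 < L
  · have hper : ∀ i, ‖gradient (fi i) w - gradient (fi i) wstar‖ ^ 2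
        ≤ 2 * L * (fi i w - fi i wstar - ⟪gradient (fi i) wstar, u⟫) := by
      intro i
      have := key_ineq (fi i) (hconv i) (hdiff i) L hL (hlip i) w wstar
      rwa [hu]
    have hsum : ∑ i, ‖gradient (fi i) w - gradient (fi i) wstar‖ ^ 2
        ≤ 2 * L * (∑ i, fi i w - ∑ i, fi i wstar) := by
      calc ∑ i, ‖gradient (fi i) w - gradient (fi i) wstar‖ ^ 2
          ≤ ∑ i, 2 * L * (fi i w - fi i wstar - ⟪gradient (fi i) wstar, u⟫) :=
            Finset.sum_le_sum fun i _ => hper i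
        _ = 2 * L * (∑ i, fi i w - ∑ i, fi i wstar
              - ∑ i, ⟪gradient (fi i) wstar, u⟫) := by
            rw [← Finset.mul_sum, Finset.sum_sub_distrib, Finset.sum_sub_distrib]
        _ = 2 * L * (∑ i, fi i w - ∑ i, fi i wstar) := by rw [hS]; ring
    have hNnn : (0:ℝ) ≤ (N : ℝ)⁻¹ := by positivity
    have := mul_le_mul_of_nonneg_left hsum hNnn
    rw [hf, hf]
    calc (N : ℝ)⁻¹ * ∑ i, ‖gradient (fi i) w - gradient (fi i) wstar‖ ^ 2
        ≤ (N : ℝ)⁻¹ * (2 * L * (∑ i, fi i w - ∑ i, fi i wstar)) := this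
      _ = 2 * L * ((N : ℝ)⁻¹ * ∑ i, fi i w - (N : ℝ)⁻¹ * ∑ i, fi i wstar) := by ring
end

section
/- Let f_1, …, f_N : ℝ^d → ℝ be convex differentiable functions whose gradients are each L-Lipschitz continuous, let f = (1/N)·Σ_{i=1}^N f_i, and let w* be a global minimizer of f (so ∇f(w*) = 0). Then for every w, w̃ ∈ ℝ^d, (1/N)·Σ_{i=1}^N ‖∇f_i(w) − ∇f_i(w̃) + ∇f(w̃)‖² ≤ 4L·(f(w) − f(w*)) + 4L·(f(w̃) − f(w*)). -/
open scoped BigOperators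

open InnerProductSpace

variable {E : Type*} [NormedAddCommGroup E] [InnerProductSpace ℝ E] [CompleteSpace E]

lemma aux_line_hasDerivAt (g : E → ℝ) (hg : Differentiable ℝ g) (x v : E) (t : ℝ) :
    HasDerivAt (fun s : ℝ => g (x + s • v)) (inner ℝ (gradient g (x + t • v)) v : ℝ) t := by
  have h1 : HasDerivAt (fun s : ℝ => x + s • v) v t := by
    simpa using ((hasDerivAt_id t).smul_const v).const_add x
  have h2 : HasFDerivAt g (toDual ℝ E (gradient g (x + t • v))) (x + t • v) :=
    ((hg (x + t • v)).hasGradientAt).hasFDerivAt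
  exact (h2.comp_hasDerivAt t h1 :)

lemma aux_conv_lb (g : E → ℝ) (hc : ConvexOn ℝ Set.univ g) (hg : Differentiable ℝ g)
    (x y : E) : (inner ℝ (gradient g y) (x - y) : ℝ) ≤ g x - g y := by
  set φ : ℝ → ℝ := fun t => g (y + t • (x - y)) with hφ
  have hφc : ConvexOn ℝ Set.univ φ := by
    have hA : ConvexOn ℝ ((AffineMap.lineMap y x : ℝ →ᵃ[ℝ] E) ⁻¹' Set.univ)
        (g ∘ (AffineMap.lineMap y x : ℝ →ᵃ[ℝ] E)) := hc.comp_affineMap _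
    have he : φ = g ∘ (AffineMap.lineMap y x : ℝ →ᵃ[ℝ] E) := by
      funext t
      simp [hφ, Function.comp_def, AffineMap.lineMap_apply_module]
      congr 1
      module
    rw [he]
    simpa using hA
  have hd0 : HasDerivAt φ (inner ℝ (gradient g (y + (0:ℝ) • (x - y))) (x - y) : ℝ) 0 :=
    aux_line_hasDerivAt g hg y (x - y) 0
  have := ConvexOn.le_slope_of_hasDerivAt hφc (Set.mem_univ (0:ℝ)) (Set.mem_univ (1:ℝ))
    (by norm_num) hd0
  simp only [slope_def_field, hφ] at this
  simpa [div_one] using this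

lemma aux_descent (g : E → ℝ) (hg : Differentiable ℝ g) {L : ℝ} (hL : 0 ≤ L)
    (hlip : ∀ x y, ‖gradient g x - gradient g y‖ ≤ L * ‖x - y‖) (x y : E) :
    g y ≤ g x + (inner ℝ (gradient g x) (y - x) : ℝ) + L / 2 * ‖y - x‖ ^ 2 := by
  set v : E := y - x with hv
  set ψ : ℝ → ℝ := fun t =>
    g (x + t • v) - t * (inner ℝ (gradient g x) v : ℝ) - L * ‖v‖ ^ 2 / 2 * t ^ 2 with hψ
  have hderiv : ∀ t : ℝ, HasDerivAt ψ
      ((inner ℝ (gradient g (x + t • v)) v : ℝ) - (inner ℝ (gradient g x) v : ℝ)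
        - L * ‖v‖ ^ 2 * t) t := by
    intro t
    have h1 := aux_line_hasDerivAt g hg x v t
    have h2 : HasDerivAt (fun t : ℝ => t * (inner ℝ (gradient g x) v : ℝ))
        (inner ℝ (gradient g x) v : ℝ) t := by
      simpa using (hasDerivAt_id t).mul_const (inner ℝ (gradient g x) v : ℝ)
    have h3 : HasDerivAt (fun t : ℝ => L * ‖v‖ ^ 2 / 2 * t ^ 2) (L * ‖v‖ ^ 2 * t) t := by
      have := (hasDerivAt_pow 2 t).const_mul (L * ‖v‖ ^ 2 / 2)
      exact this.congr_deriv (by push_cast; ring)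
    simp only [hψ]; exact ((h1.sub h2).sub h3 :)
  have hanti : AntitoneOn ψ (Set.Icc (0:ℝ) 1) := by
    apply antitoneOn_of_deriv_nonpos (convex_Icc 0 1)
    · exact (Differentiable.continuous fun t => (hderiv t).differentiableAt).continuousOn
    · intro t ht
      exact (hderiv t).differentiableAt.differentiableWithinAt
    · intro t ht
      rw [interior_Icc] at ht
      rw [(hderiv t).deriv]
      have hb : (inner ℝ (gradient g (x + t • v)) v : ℝ) - (inner ℝ (gradient g x) v : ℝ)
          ≤ L * ‖v‖ ^ 2 * t := by
        have h1 : (inner ℝ (gradient g (x + t • v)) v : ℝ) - (inner ℝ (gradient g x) v : ℝ)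
            = (inner ℝ (gradient g (x + t • v) - gradient g x) v : ℝ) := by
          rw [inner_sub_left]
        rw [h1]
        calc (inner ℝ (gradient g (x + t • v) - gradient g x) v : ℝ)
            ≤ ‖gradient g (x + t • v) - gradient g x‖ * ‖v‖ := real_inner_le_norm _ _
          _ ≤ (L * ‖x + t • v - x‖) * ‖v‖ := by
              exact mul_le_mul_of_nonneg_right (hlip _ _) (norm_nonneg _)
          _ = L * ‖v‖ ^ 2 * t := by
              have : x + t • v - x = t • v := by abel
              rw [this, norm_smul, Real.norm_eq_abs, abs_of_pos ht.1]
              ring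
      linarith
  have h01 := hanti (Set.mem_Icc.2 ⟨le_refl 0, zero_le_one⟩)
    (Set.mem_Icc.2 ⟨zero_le_one, le_refl 1⟩) zero_le_one
  have hψ0 : ψ 0 = g x := by simp [hψ]
  have hψ1 : ψ 1 = g y - (inner ℝ (gradient g x) v : ℝ) - L * ‖v‖ ^ 2 / 2 := by
    simp [hψ, hv]
  rw [hψ0, hψ1] at h01
  have : L * ‖v‖ ^ 2 / 2 = L / 2 * ‖y - x‖ ^ 2 := by rw [hv]; ring
  linarith [this ▸ h01]

lemma aux_coco (g : E → ℝ) (hc : ConvexOn ℝ Set.univ g) (hg : Differentiable ℝ g)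
    {L : ℝ} (hL : 0 ≤ L) (hlip : ∀ x y, ‖gradient g x - gradient g y‖ ≤ L * ‖x - y‖)
    (x y : E) :
    ‖gradient g x - gradient g y‖ ^ 2
      ≤ 2 * L * (g x - g y - (inner ℝ (gradient g y) (x - y) : ℝ)) := by
  rcases eq_or_lt_of_le hL with hL0 | hLpos
  · -- L = 0 : gradient constant
    have h0 : ‖gradient g x - gradient g y‖ ≤ 0 := by
      have := hlip x y; rw [← hL0] at this; simpa using this
    have h1 : ‖gradient g x - gradient g y‖ = 0 := le_antisymm h0 (norm_nonneg _)
    have h2 := aux_conv_lb g hc hg x y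
    rw [h1, ← hL0]
    nlinarith
  · set v : E := gradient g x - gradient g y with hv
    set z : E := x - L⁻¹ • v with hz
    have hdesc := aux_descent g hg hL hlip x z
    have hconv := aux_conv_lb g hc hg z y
    have hzx : z - x = -(L⁻¹ • v) := by rw [hz]; abel
    have hnorm : ‖z - x‖ ^ 2 = L⁻¹ ^ 2 * ‖v‖ ^ 2 := by
      rw [hzx, norm_neg, norm_smul, Real.norm_eq_abs, abs_of_pos (by positivity : (0:ℝ) < L⁻¹)]
      ring
    have hinner1 : (inner ℝ (gradient g x) (z - x) : ℝ) = -(L⁻¹ * (inner ℝ (gradient g x) v : ℝ)) := by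
      rw [hzx, inner_neg_right, inner_smul_right]
    have hinner2 : (inner ℝ (gradient g y) (z - y) : ℝ)
        = (inner ℝ (gradient g y) (x - y) : ℝ) - L⁻¹ * (inner ℝ (gradient g y) v : ℝ) := by
      have : z - y = (x - y) - L⁻¹ • v := by rw [hz]; abel
      rw [this, inner_sub_right, inner_smul_right]
    have hvv : (inner ℝ (gradient g x) v : ℝ) - (inner ℝ (gradient g y) v : ℝ) = ‖v‖ ^ 2 := by
      rw [← inner_sub_left, ← hv, real_inner_self_eq_norm_sq]
    rw [hnorm, hinner1] at hdesc
    rw [hinner2] at hconv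
    have hLinv : L * L⁻¹ = 1 := mul_inv_cancel₀ (ne_of_gt hLpos)
    -- combine: g y + ⟪∇g y, x-y⟫ - L⁻¹⟪∇g y,v⟫ ≤ g z ≤ g x - L⁻¹⟪∇g x,v⟫ + (L/2) L⁻²‖v‖²
    have e1 : L / 2 * (L⁻¹ ^ 2 * ‖v‖ ^ 2) = 1 / 2 * (L⁻¹ * ‖v‖ ^ 2) := by
      field_simp
    have e2 : L⁻¹ * (inner ℝ (gradient g x) v : ℝ) - L⁻¹ * (inner ℝ (gradient g y) v : ℝ)
        = L⁻¹ * ‖v‖ ^ 2 := by rw [← mul_sub, hvv]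
    have hcomb : 1 / 2 * (L⁻¹ * ‖v‖ ^ 2)
        ≤ g x - g y - (inner ℝ (gradient g y) (x - y) : ℝ) := by linarith
    have hmul := mul_le_mul_of_nonneg_left hcomb
      (le_of_lt (by positivity : (0:ℝ) < 2 * L))
    have e3 : 2 * L * (1 / 2 * (L⁻¹ * ‖v‖ ^ 2)) = ‖v‖ ^ 2 := by
      field_simp
    rw [e3] at hmul
    exact hmul

set_option maxHeartbeats 1000000

/-- **Second-moment bound for the SVRG variance-reduced gradient estimator.**
If each `f_i : ℝ^d → ℝ` is convex and differentiable with `L`-Lipschitz gradient,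
`f = (1/N)·Σᵢ fᵢ`, and `w*` is a global minimizer of `f`, then for every `w, w̃`,
`(1/N)·Σᵢ ‖∇fᵢ(w) − ∇fᵢ(w̃) + ∇f(w̃)‖² ≤ 4L(f(w) − f(w*)) + 4L(f(w̃) − f(w*))`. -/
theorem svrg_estimator_second_moment {d N : ℕ} (L : ℝ)
    (fi : Fin N → EuclideanSpace ℝ (Fin d) → ℝ)
    (f : EuclideanSpace ℝ (Fin d) → ℝ)
    (hconv : ∀ i, ConvexOn ℝ Set.univ (fi i))
    (hdiff : ∀ i, Differentiable ℝ (fi i))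
    (hlip : ∀ i x y, ‖gradient (fi i) x - gradient (fi i) y‖ ≤ L * ‖x - y‖)
    (hf : ∀ x, f x = (N : ℝ)⁻¹ * ∑ i, fi i x)
    (wstar : EuclideanSpace ℝ (Fin d))
    (hmin : ∀ x, f wstar ≤ f x) :
    ∀ w wt, (N : ℝ)⁻¹ * ∑ i, ‖gradient (fi i) w - gradient (fi i) wt + gradient f wt‖ ^ 2
      ≤ 4 * L * (f w - f wstar) + 4 * L * (f wt - f wstar) := by
  intro w wt
  rcases Nat.eq_zero_or_pos N with hN | hN
  · subst hN
    simp [hf]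
  rcases Nat.eq_zero_or_pos d with hd | hd
  · subst hd
    haveI : Subsingleton (EuclideanSpace ℝ (Fin 0)) :=
      ⟨fun a b => by ext i; exact Fin.elim0 i⟩
    have hz : ∀ x : EuclideanSpace ℝ (Fin 0), ‖x‖ = 0 := fun x => by
      rw [Subsingleton.elim x 0]; simp
    have hw : f w = f wstar := by rw [Subsingleton.elim w wstar]
    have hwt : f wt = f wstar := by rw [Subsingleton.elim wt wstar]
    simp [hz, hw, hwt]
  -- main case
  have hNpos : (0:ℝ) < (N:ℝ) := by exact_mod_cast hN
  have hL : 0 ≤ L := by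
    have h1 := hlip ⟨0, hN⟩ (EuclideanSpace.single (⟨0, hd⟩ : Fin d) (1:ℝ))
      (0 : EuclideanSpace ℝ (Fin d))
    have h2 : ‖EuclideanSpace.single (⟨0, hd⟩ : Fin d) (1:ℝ)
        - (0 : EuclideanSpace ℝ (Fin d))‖ = 1 := by
      simp [EuclideanSpace.norm_single]
    rw [h2, mul_one] at h1
    exact le_trans (norm_nonneg _) h1
  -- gradient of f
  have hfd : ∀ x : (EuclideanSpace ℝ (Fin d)), HasGradientAt f ((N:ℝ)⁻¹ • ∑ i, gradient (fi i) x) x := by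
    intro x
    have hsum : HasFDerivAt (fun y => ∑ i, fi i y)
        (∑ i, InnerProductSpace.toDual ℝ (EuclideanSpace ℝ (Fin d)) (gradient (fi i) x)) x :=
      HasFDerivAt.fun_sum (fun i _ => ((hdiff i x).hasGradientAt).hasFDerivAt)
    have h2 := hsum.const_mul ((N:ℝ)⁻¹)
    have h3 : f = fun y => (N:ℝ)⁻¹ * ∑ i, fi i y := funext hf
    rw [hasGradientAt_iff_hasFDerivAt, h3]
    have h4 : InnerProductSpace.toDual ℝ (EuclideanSpace ℝ (Fin d)) ((N:ℝ)⁻¹ • ∑ i, gradient (fi i) x)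
        = (N:ℝ)⁻¹ • ∑ i, InnerProductSpace.toDual ℝ (EuclideanSpace ℝ (Fin d)) (gradient (fi i) x) := by
      simp [map_smul, map_sum]
    rw [h4]
    exact h2
  have hgradf : ∀ x : (EuclideanSpace ℝ (Fin d)), gradient f x = (N:ℝ)⁻¹ • ∑ i, gradient (fi i) x :=
    fun x => (hfd x).gradient
  -- gradient zero at wstar
  have hmin' : IsLocalMin f wstar := Filter.Eventually.of_forall hmin
  have hz : InnerProductSpace.toDual ℝ (EuclideanSpace ℝ (Fin d)) ((N:ℝ)⁻¹ • ∑ i, gradient (fi i) wstar) = 0 :=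
    hmin'.hasFDerivAt_eq_zero ((hfd wstar).hasFDerivAt)
  have hz2 : (N:ℝ)⁻¹ • ∑ i, gradient (fi i) wstar = 0 := by
    have h := congrArg (InnerProductSpace.toDual ℝ (EuclideanSpace ℝ (Fin d))).symm hz
    simpa only [LinearIsometryEquiv.symm_apply_apply, map_zero] using h
  have hsumz : ∑ i, gradient (fi i) wstar = 0 := by
    have hNne : ((N:ℝ)⁻¹ : ℝ) ≠ 0 := by positivity
    exact (smul_eq_zero.1 hz2).resolve_left hNne
  obtain ⟨m, hm⟩ : ∃ m : EuclideanSpace ℝ (Fin d), m = gradient f wt := ⟨_, rfl⟩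
  obtain ⟨a, ha⟩ : ∃ a : Fin N → EuclideanSpace ℝ (Fin d),
      a = fun i => gradient (fi i) w - gradient (fi i) wstar := ⟨_, rfl⟩
  obtain ⟨b, hb⟩ : ∃ b : Fin N → EuclideanSpace ℝ (Fin d),
      b = fun i => gradient (fi i) wt - gradient (fi i) wstar := ⟨_, rfl⟩
  rw [← hm]
  have hbm : ∑ i, b i = (N:ℝ) • m := by
    simp only [hb, hm, hgradf wt]
    rw [Finset.sum_sub_distrib, hsumz, sub_zero, smul_smul,
      mul_inv_cancel₀ (ne_of_gt hNpos), one_smul]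
  -- pointwise estimator bound
  have hest : ∀ i, ‖gradient (fi i) w - gradient (fi i) wt + m‖ ^ 2
      ≤ 2 * ‖a i‖ ^ 2 + 2 * ‖b i - m‖ ^ 2 := by
    intro i
    have he : gradient (fi i) w - gradient (fi i) wt + m = a i - (b i - m) := by
      simp only [ha, hb]; abel
    rw [he]
    have h1 : ‖a i - (b i - m)‖ ≤ ‖a i‖ + ‖b i - m‖ := norm_sub_le _ _
    nlinarith [pow_le_pow_left₀ (norm_nonneg _) h1 2, sq_nonneg (‖a i‖ - ‖b i - m‖)]
  -- variance reduction
  have hvar : ∑ i, ‖b i - m‖ ^ 2 ≤ ∑ i, ‖b i‖ ^ 2 := by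
    have hid : ∑ i, ‖b i - m‖ ^ 2
        = (∑ i, ‖b i‖ ^ 2) - 2 * (inner ℝ (∑ i, b i) m : ℝ) + (N:ℝ) * ‖m‖ ^ 2 := by
      have h1 : ∀ i : Fin N, ‖b i - m‖ ^ 2
          = ‖b i‖ ^ 2 - 2 * (inner ℝ (b i) m : ℝ) + ‖m‖ ^ 2 :=
        fun i => norm_sub_sq_real (b i) m
      rw [Finset.sum_congr rfl fun i _ => h1 i, Finset.sum_add_distrib,
        Finset.sum_sub_distrib, Finset.sum_const, ← Finset.mul_sum, sum_inner]
      simp [Finset.card_univ, nsmul_eq_mul]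
    have h2 : (inner ℝ (∑ i, b i) m : ℝ) = (N:ℝ) * ‖m‖ ^ 2 := by
      rw [hbm, real_inner_smul_left, real_inner_self_eq_norm_sq]
    linarith only [hid, h2, mul_nonneg hNpos.le (sq_nonneg ‖m‖)]
  -- cocoercivity sums
  have hfs : ∀ x : (EuclideanSpace ℝ (Fin d)), ∑ i, fi i x = (N:ℝ) * f x := by
    intro x
    rw [hf x]
    field_simp
  have hsums : ∀ (u : (EuclideanSpace ℝ (Fin d))), (∑ i, ‖gradient (fi i) u - gradient (fi i) wstar‖ ^ 2)
      ≤ 2 * L * ((N:ℝ) * (f u - f wstar)) := by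
    intro u
    have h1 : ∀ i : Fin N, ‖gradient (fi i) u - gradient (fi i) wstar‖ ^ 2
        ≤ 2 * L * (fi i u - fi i wstar
          - (inner ℝ (gradient (fi i) wstar) (u - wstar) : ℝ)) :=
      fun i => aux_coco (fi i) (hconv i) (hdiff i) hL (hlip i) u wstar
    calc (∑ i, ‖gradient (fi i) u - gradient (fi i) wstar‖ ^ 2)
        ≤ ∑ i, 2 * L * (fi i u - fi i wstar
            - (inner ℝ (gradient (fi i) wstar) (u - wstar) : ℝ)) :=
          Finset.sum_le_sum fun i _ => h1 i
      _ = 2 * L * ((∑ i, fi i u) - (∑ i, fi i wstar)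
            - (inner ℝ (∑ i, gradient (fi i) wstar) (u - wstar) : ℝ)) := by
          rw [← Finset.mul_sum, Finset.sum_sub_distrib, Finset.sum_sub_distrib, sum_inner]
      _ = 2 * L * ((N:ℝ) * (f u - f wstar)) := by
          rw [hsumz, inner_zero_left, sub_zero, hfs u, hfs wstar]
          ring
  have hA := hsums w
  have hB : (∑ i, ‖b i‖ ^ 2) ≤ 2 * L * ((N:ℝ) * (f wt - f wstar)) := by
    simp only [hb]; exact hsums wt
  -- combine
  have step1 : (∑ i, ‖gradient (fi i) w - gradient (fi i) wt + m‖ ^ 2)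
      ≤ 2 * (∑ i, ‖a i‖ ^ 2) + 2 * (∑ i, ‖b i - m‖ ^ 2) := by
    calc (∑ i, ‖gradient (fi i) w - gradient (fi i) wt + m‖ ^ 2)
        ≤ ∑ i, (2 * ‖a i‖ ^ 2 + 2 * ‖b i - m‖ ^ 2) := Finset.sum_le_sum fun i _ => hest i
      _ = 2 * (∑ i, ‖a i‖ ^ 2) + 2 * (∑ i, ‖b i - m‖ ^ 2) := by
          rw [Finset.sum_add_distrib, Finset.mul_sum, Finset.mul_sum]
  have hA' : (∑ i, ‖a i‖ ^ 2) ≤ 2 * L * ((N:ℝ) * (f w - f wstar)) := by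
    simp only [ha]; exact hA
  have step2 : (∑ i, ‖gradient (fi i) w - gradient (fi i) wt + m‖ ^ 2)
      ≤ 4 * L * (N:ℝ) * (f w - f wstar) + 4 * L * (N:ℝ) * (f wt - f wstar) := by
    nlinarith [step1, hA', hB, hvar]
  have hfin := mul_le_mul_of_nonneg_left step2 (le_of_lt (inv_pos.2 hNpos))
  calc (N : ℝ)⁻¹ * ∑ i, ‖gradient (fi i) w - gradient (fi i) wt + m‖ ^ 2
      ≤ (N:ℝ)⁻¹ * (4 * L * (N:ℝ) * (f w - f wstar) + 4 * L * (N:ℝ) * (f wt - f wstar)) :=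
        hfin
    _ = 4 * L * (f w - f wstar) + 4 * L * (f wt - f wstar) := by
        field_simp
end
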